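/- Let u = p/q with p, q positive coprime integers, 0 < u < 1, such that p* + q* is odd. Then μ_u is absolutely continuous with respect to Lebesgue measure, with density essentially bounded by 2q; equivalently, μ_u(A) ≤ 2q·(Lebesgue measure of A) for every measurable set A ⊆ ℝ. -/

import Mathlib

open MeasureTheory

/-- The product of Bernoulli(1/2) measures on `{0,1}^ℕ`, realized as the joint law of
the binary digits of a uniform random point of `[0,1)` (these digits are i.i.d.
Bernoulli(1/2), so this is exactly the infinite product of Bernoulli(1/2) measures). -/
noncomputable def bernoulliProd : Measure (ℕ → Bool) :=
  Measure.map (fun x j => decide (⌊x * 2 ^ (j + 1)⌋ % 2 = 1))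
    (volume.restrict (Set.Ico (0 : ℝ) 1))

/-- `μ_u`: the pushforward of the product of Bernoulli(1/2) measures on `({0,1}^ℕ)²`
under `(ε, ε') ↦ ∑_{j=1}^∞ (ε_j + u·ε'_j)·4^{-j}`. -/
noncomputable def muBes (u : ℝ) : Measure ℝ :=
  Measure.map
    (fun εε' : (ℕ → Bool) × (ℕ → Bool) =>
      ∑' j : ℕ, ((if εε'.1 j then (1 : ℝ) else 0) + u * (if εε'.2 j then (1 : ℝ) else 0))
        / 4 ^ (j + 1))
    (bernoulliProd.prod bernoulliProd)

/-- `n* `: the first nonzero digit from the right of `n` in base `b`,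
i.e. `(n / b^{j*}) % b` where `j*` is the largest `j` with `b^j ∣ n`. -/
def fstDigit (b n : ℕ) : ℕ := n / b ^ padicValNat b n % b

namespace MuBesAux


/-- Spread the binary digits of `k` into base 4: `Φ n k = ∑_{i<n} bit_i(k)·4^i`. -/
def Phi (n k : ℕ) : ℕ := ∑ i ∈ Finset.range n, (k / 2 ^ i % 2) * 4 ^ i

lemma Phi_succ (n k : ℕ) : Phi (n + 1) k = k % 2 + 4 * Phi n (k / 2) := by
  unfold Phi
  rw [Finset.sum_range_succ']
  have h : ∀ i : ℕ, k / 2 ^ (i + 1) % 2 * 4 ^ (i + 1) = 4 * (k / 2 / 2 ^ i % 2 * 4 ^ i) := by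
    intro i
    have : k / 2 ^ (i + 1) = k / 2 / 2 ^ i := by
      rw [Nat.div_div_eq_div_mul, pow_succ']
    rw [this, pow_succ']; ring
  simp only [h, ← Finset.mul_sum, pow_zero, Nat.pow_zero, Nat.div_one, mul_one]
  omega

lemma Phi_inj : ∀ n : ℕ, ∀ k < 2 ^ n, ∀ k' < 2 ^ n, Phi n k = Phi n k' → k = k' := by
  intro n
  induction n with
  | zero => intro k hk k' hk' _; omega
  | succ n ih =>
    intro k hk k' hk' h
    rw [Phi_succ, Phi_succ] at h
    have h2 : k % 2 = k' % 2 ∧ Phi n (k / 2) = Phi n (k' / 2) := by omega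
    have hpow : 2 ^ (n + 1) = 2 * 2 ^ n := by rw [pow_succ']
    have := ih (k / 2) (by omega) (k' / 2) (by omega) h2.2
    omega

lemma Phi_diff : ∀ n k k' : ℕ, Phi n k ≠ Phi n k' →
    ∃ (i : ℕ) (e : ℤ), (Phi n k : ℤ) - (Phi n k' : ℤ) = 4 ^ i * e ∧ Odd e := by
  intro n
  induction n with
  | zero => intro k k' h; exact absurd rfl h
  | succ n ih =>
    intro k k' h
    rcases eq_or_ne (k % 2) (k' % 2) with he | he
    · have hne : Phi n (k / 2) ≠ Phi n (k' / 2) := by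
        intro hh; exact h (by rw [Phi_succ, Phi_succ, he, hh])
      obtain ⟨i, e, hie, ho⟩ := ih _ _ hne
      refine ⟨i + 1, e, ?_, ho⟩
      rw [Phi_succ, Phi_succ]
      push_cast
      have hc : (k : ℤ) % 2 = (k' : ℤ) % 2 := by omega
      have h4 : (4 : ℤ) ^ (i + 1) * e = 4 * (4 ^ i * e) := by ring
      omega
    · refine ⟨0, (Phi (n + 1) k : ℤ) - (Phi (n + 1) k' : ℤ), by ring, ?_⟩
      rw [Phi_succ, Phi_succ]
      rw [Int.odd_iff]
      push_cast
      have h1 : k % 2 = 0 ∨ k % 2 = 1 := by omega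
      have h2 : k' % 2 = 0 ∨ k' % 2 = 1 := by omega
      omega

lemma two_pow_mul_odd {a b : ℕ} {A B : ℤ} (hA : Odd A) (hB : Odd B)
    (h : 2 ^ a * A = 2 ^ b * B) : a = b := by
  rcases lt_trichotomy a b with hab | hab | hab
  · exfalso
    have h2 : (2 : ℤ) ^ a ≠ 0 := by positivity
    have : A = 2 ^ (b - a) * B := by
      apply mul_left_cancel₀ h2
      rw [h, ← mul_assoc, ← pow_add]
      congr 2
      omega
    have : (2 : ℤ) ∣ A := by
      rw [this]
      exact Dvd.dvd.mul_right (dvd_pow_self 2 (by omega)) B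
    rw [Int.odd_iff] at hA; omega
  · exact hab
  · exfalso
    have h2 : (2 : ℤ) ^ b ≠ 0 := by positivity
    have : B = 2 ^ (a - b) * A := by
      apply mul_left_cancel₀ h2
      rw [← h, ← mul_assoc, ← pow_add]
      congr 2
      omega
    have : (2 : ℤ) ∣ B := by
      rw [this]
      exact Dvd.dvd.mul_right (dvd_pow_self 2 (by omega)) A
    rw [Int.odd_iff] at hB; omega

lemma odd_ordCompl {m : ℕ} (hm : m ≠ 0) : ¬ 2 ∣ (m / 2 ^ padicValNat 2 m) := by
  intro hdvd
  have h1 : 2 ^ padicValNat 2 m ∣ m := pow_padicValNat_dvd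
  have h2 : ¬ 2 ^ (padicValNat 2 m + 1) ∣ m := pow_succ_padicValNat_not_dvd hm
  obtain ⟨d, hd⟩ := hdvd
  have hmm : m = 2 ^ padicValNat 2 m * (m / 2 ^ padicValNat 2 m) :=
    (Nat.mul_div_cancel' h1).symm
  rw [hd] at hmm
  refine h2 ⟨d, ?_⟩
  conv_lhs => rw [hmm]
  rw [pow_succ]; ring

lemma decomp (m : ℕ) (hm : m ≠ 0) :
    m = 2 ^ padicValNat 2 m * (m / 2 ^ padicValNat 2 m) :=
  (Nat.mul_div_cancel' pow_padicValNat_dvd).symm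

/-- `fstDigit 4 m` is even iff the 2-adic valuation of `m` is odd. -/
lemma fstDigit_parity (m : ℕ) (hm : m ≠ 0) :
    (m / 4 ^ padicValNat 4 m % 4) % 2 = (padicValNat 2 m + 1) % 2 := by
  set e := padicValNat 2 m with he
  set m' := m / 2 ^ e with hm'
  have hodd : ¬ 2 ∣ m' := odd_ordCompl hm
  have hdec : m = 2 ^ e * m' := decomp m hm
  -- padicValNat 4 m = e / 2
  have hval4 : padicValNat 4 m = e / 2 := by
    rw [padicValNat_def' (by norm_num) hm]
    apply multiplicity_eq_of_dvd_of_not_dvd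
    · have : (4 : ℕ) ^ (e / 2) = 2 ^ (2 * (e / 2)) := by
        rw [show (4 : ℕ) = 2 ^ 2 from rfl, ← pow_mul]
      rw [this, hdec]
      exact Dvd.dvd.mul_right (pow_dvd_pow 2 (by omega)) m'
    · intro hdvd
      have h4 : (4 : ℕ) ^ (e / 2 + 1) = 2 ^ (2 * (e / 2) + 2) := by
        rw [show 2 * (e / 2) + 2 = 2 * (e / 2 + 1) by omega,
          show (4 : ℕ) = 2 ^ 2 from rfl, ← pow_mul]
      rw [h4] at hdvd
      have h5 : (2 : ℕ) ^ (e + 1) ∣ 2 ^ (2 * (e / 2) + 2) := pow_dvd_pow 2 (by omega)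
      exact pow_succ_padicValNat_not_dvd hm (h5.trans hdvd)
  rw [hval4]
  -- m / 4^(e/2) = 2^(e % 2) * m'
  have hdiv : m / 4 ^ (e / 2) = 2 ^ (e % 2) * m' := by
    have h44 : (4 : ℕ) ^ (e / 2) = 2 ^ (2 * (e / 2)) := by
      rw [show (4 : ℕ) = 2 ^ 2 from rfl, ← pow_mul]
    rw [h44, hdec]
    have : (2:ℕ) ^ e = 2 ^ (2 * (e / 2)) * 2 ^ (e % 2) := by
      rw [← pow_add]; congr 1; omega
    rw [this, mul_assoc]
    exact Nat.mul_div_cancel_left _ (by positivity)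
  rw [hdiv]
  have hmod : (2 ^ (e % 2) * m' % 4) % 2 = (2 ^ (e % 2) * m') % 2 :=
    Nat.mod_mod_of_dvd _ (by norm_num)
  rw [hmod]
  rcases Nat.even_or_odd e with hev | hod
  · have h0 : e % 2 = 0 := Nat.even_iff.mp hev
    rw [h0, pow_zero, one_mul]; omega
  · have h1 : e % 2 = 1 := Nat.odd_iff.mp hod
    rw [h1, pow_one]; omega

/-- Main injectivity: under the parity condition, `(k,l) ↦ q·Φ(k) + p·Φ(l)` is injective. -/
lemma key_inj (p q n : ℕ) (hp : 0 < p) (hq : 0 < q)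
    (hodd : Odd (padicValNat 2 p + padicValNat 2 q))
    {k l k' l' : ℕ} (hk : k < 2 ^ n) (hl : l < 2 ^ n) (hk' : k' < 2 ^ n) (hl' : l' < 2 ^ n)
    (h : q * Phi n k + p * Phi n l = q * Phi n k' + p * Phi n l') : k = k' ∧ l = l' := by
  have hZ : (q : ℤ) * ((Phi n k : ℤ) - Phi n k') = (p : ℤ) * ((Phi n l' : ℤ) - Phi n l) := by
    have : (q : ℤ) * Phi n k + p * Phi n l = q * Phi n k' + p * Phi n l' := by exact_mod_cast h
    ring_nf
    ring_nf at this
    linarith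
  rcases eq_or_ne (Phi n k) (Phi n k') with hΦ | hΦ
  · refine ⟨Phi_inj n k hk k' hk' hΦ, ?_⟩
    have : (p : ℤ) * ((Phi n l' : ℤ) - Phi n l) = 0 := by
      rw [← hZ, hΦ]; ring
    have hpz : (p : ℤ) ≠ 0 := by exact_mod_cast hp.ne'
    have : (Phi n l : ℤ) = Phi n l' := by
      rcases mul_eq_zero.mp this with h' | h'
      · exact absurd h' hpz
      · linarith
    exact Phi_inj n l hl l' hl' (by exact_mod_cast this)
  · exfalso
    have hΦl : Phi n l ≠ Phi n l' := by
      intro hh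
      apply hΦ
      have : (q : ℤ) * ((Phi n k : ℤ) - Phi n k') = 0 := by rw [hZ, hh]; ring
      have hqz : (q : ℤ) ≠ 0 := by exact_mod_cast hq.ne'
      rcases mul_eq_zero.mp this with h' | h'
      · exact absurd h' hqz
      · have : (Phi n k : ℤ) = Phi n k' := by linarith
        exact_mod_cast this
    obtain ⟨i, e, hie, hoe⟩ := Phi_diff n k k' hΦ
    obtain ⟨i', e', hie', hoe'⟩ := Phi_diff n l' l hΦl.symm
    have hpd : (p : ℤ) = 2 ^ padicValNat 2 p * ((p / 2 ^ padicValNat 2 p : ℕ) : ℤ) := by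
      exact_mod_cast decomp p hp.ne'
    have hqd : (q : ℤ) = 2 ^ padicValNat 2 q * ((q / 2 ^ padicValNat 2 q : ℕ) : ℤ) := by
      exact_mod_cast decomp q hq.ne'
    have hop : Odd ((p / 2 ^ padicValNat 2 p : ℕ) : ℤ) := by
      rw [Int.odd_iff]
      have := odd_ordCompl hp.ne'
      omega
    have hoq : Odd ((q / 2 ^ padicValNat 2 q : ℕ) : ℤ) := by
      rw [Int.odd_iff]
      have := odd_ordCompl hq.ne'
      omega
    have heq : (2 : ℤ) ^ (padicValNat 2 q + 2 * i) * (((q / 2 ^ padicValNat 2 q : ℕ) : ℤ) * e)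
        = 2 ^ (padicValNat 2 p + 2 * i') * (((p / 2 ^ padicValNat 2 p : ℕ) : ℤ) * e') := by
      have h4 : (4 : ℤ) ^ i = 2 ^ (2 * i) := by
        rw [show (4 : ℤ) = 2 ^ 2 by norm_num, ← pow_mul]
      have h4' : (4 : ℤ) ^ i' = 2 ^ (2 * i') := by
        rw [show (4 : ℤ) = 2 ^ 2 by norm_num, ← pow_mul]
      calc (2 : ℤ) ^ (padicValNat 2 q + 2 * i) * (((q / 2 ^ padicValNat 2 q : ℕ) : ℤ) * e)
          = (2 ^ padicValNat 2 q * ((q / 2 ^ padicValNat 2 q : ℕ) : ℤ))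
            * (2 ^ (2 * i) * e) := by rw [pow_add]; ring
        _ = (q : ℤ) * (4 ^ i * e) := by rw [← hqd, h4]
        _ = (p : ℤ) * (4 ^ i' * e') := by rw [← hie, ← hie']; exact hZ
        _ = (2 ^ padicValNat 2 p * ((p / 2 ^ padicValNat 2 p : ℕ) : ℤ))
            * (2 ^ (2 * i') * e') := by rw [← hpd, h4']
        _ = 2 ^ (padicValNat 2 p + 2 * i') * (((p / 2 ^ padicValNat 2 p : ℕ) : ℤ) * e') := by
            rw [pow_add]; ring
    have := two_pow_mul_odd (hoq.mul hoe) (hop.mul hoe') heq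
    rw [Nat.odd_iff] at hodd
    omega



lemma floor_div_nat (x : ℝ) (m : ℕ) (hm : 0 < m) : ⌊x / (m : ℝ)⌋ = ⌊x⌋ / (m : ℤ) := by
  have h0 : (0 : ℤ) < (m : ℤ) := by exact_mod_cast hm
  have hdm := Int.mul_ediv_add_emod ⌊x⌋ (m : ℤ)
  have hr0 : 0 ≤ ⌊x⌋ % m := Int.emod_nonneg _ (by omega)
  have hrm : ⌊x⌋ % m < m := Int.emod_lt_of_pos _ h0
  have hmR : (0 : ℝ) < (m : ℝ) := by exact_mod_cast hm
  rw [Int.floor_eq_iff]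
  constructor
  · have h1 : ((⌊x⌋ / m : ℤ) : ℝ) * m ≤ (⌊x⌋ : ℝ) := by
      have : (⌊x⌋ / m) * m ≤ ⌊x⌋ := by
        have hexp : (⌊x⌋ / m) * m = m * (⌊x⌋ / m) := by ring
        linarith [hdm, hr0]
      exact_mod_cast this
    have h2 : (⌊x⌋ : ℝ) ≤ x := Int.floor_le x
    rw [le_div_iff₀ hmR]
    linarith
  · have h1 : (⌊x⌋ : ℝ) + 1 ≤ (((⌊x⌋ / m : ℤ) : ℝ) + 1) * m := by
      have : ⌊x⌋ + 1 ≤ (⌊x⌋ / m + 1) * m := by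
        have hexp : (⌊x⌋ / m + 1) * m = m * (⌊x⌋ / m) + m := by ring
        linarith [hdm, hrm]
      calc (⌊x⌋ : ℝ) + 1 = ((⌊x⌋ + 1 : ℤ) : ℝ) := by push_cast; ring
        _ ≤ (((⌊x⌋ / m + 1) * m : ℤ) : ℝ) := by exact_mod_cast this
        _ = (((⌊x⌋ / m : ℤ) : ℝ) + 1) * m := by push_cast; ring
    have h2 : x < (⌊x⌋ : ℝ) + 1 := Int.lt_floor_add_one x
    rw [div_lt_iff₀ hmR]
    linarith

lemma floor_dyadic {x : ℝ} (hx : 0 ≤ x) {n j : ℕ} (hj : j < n) :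
    ⌊x * 2 ^ (j + 1)⌋ = ⌊x * 2 ^ n⌋ / ((2 ^ (n - 1 - j) : ℕ) : ℤ) := by
  have hsplit : (2 : ℝ) ^ n = 2 ^ (j + 1) * 2 ^ (n - 1 - j) := by
    rw [← pow_add]; congr 1; omega
  have hpos : (0 : ℝ) < 2 ^ (n - 1 - j) := by positivity
  have : x * 2 ^ (j + 1) = x * 2 ^ n / ((2 ^ (n - 1 - j) : ℕ) : ℝ) := by
    rw [hsplit]; push_cast; field_simp
  rw [this, floor_div_nat _ _ (by positivity)]

lemma toNat_floor_facts {x : ℝ} (hx : x ∈ Set.Ico (0 : ℝ) 1) (n : ℕ) :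
    ((⌊x * 2 ^ n⌋.toNat : ℝ) ≤ x * 2 ^ n ∧ x * 2 ^ n < (⌊x * 2 ^ n⌋.toNat : ℝ) + 1)
      ∧ ⌊x * 2 ^ n⌋.toNat < 2 ^ n := by
  obtain ⟨hx0, hx1⟩ := hx
  have hnn : (0 : ℝ) ≤ x * 2 ^ n := by positivity
  have hfl : (⌊x * 2 ^ n⌋.toNat : ℤ) = ⌊x * 2 ^ n⌋ := Int.toNat_of_nonneg (Int.floor_nonneg.2 hnn)
  have hcast : ((⌊x * 2 ^ n⌋.toNat : ℕ) : ℝ) = ((⌊x * 2 ^ n⌋ : ℤ) : ℝ) := by exact_mod_cast congrArg (Int.cast : ℤ → ℝ) hfl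
  refine ⟨⟨?_, ?_⟩, ?_⟩
  · rw [hcast]; exact Int.floor_le _
  · rw [hcast]; exact Int.lt_floor_add_one _
  · have hlt : x * 2 ^ n < 2 ^ n := by
      have : (0:ℝ) < 2 ^ n := by positivity
      nlinarith
    have h5 : ⌊x * 2 ^ n⌋ < ((2 ^ n : ℕ) : ℤ) := by
      apply Int.floor_lt.2
      push_cast
      exact hlt
    omega

lemma bit_eq {x : ℝ} (hx : x ∈ Set.Ico (0 : ℝ) 1) {n j : ℕ} (hj : j < n) :
    (if ⌊x * 2 ^ (j + 1)⌋ % 2 = 1 then (1 : ℝ) else 0)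
      = ((⌊x * 2 ^ n⌋.toNat / 2 ^ (n - 1 - j) % 2 : ℕ) : ℝ) := by
  have hx0 := hx.1
  have hnn : (0 : ℝ) ≤ x * 2 ^ n := by positivity
  have hfl : (⌊x * 2 ^ n⌋.toNat : ℤ) = ⌊x * 2 ^ n⌋ :=
    Int.toNat_of_nonneg (Int.floor_nonneg.2 hnn)
  have hkey : ⌊x * 2 ^ (j + 1)⌋ = ((⌊x * 2 ^ n⌋.toNat / 2 ^ (n - 1 - j) : ℕ) : ℤ) := by
    rw [floor_dyadic hx.1 hj, Int.natCast_div, hfl]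
  rw [hkey]
  split_ifs with hc
  · have h1 : ⌊x * 2 ^ n⌋.toNat / 2 ^ (n - 1 - j) % 2 = 1 := by omega
    rw [h1]; norm_num
  · have h0 : ⌊x * 2 ^ n⌋.toNat / 2 ^ (n - 1 - j) % 2 = 0 := by omega
    rw [h0]; norm_num

lemma partial_sum {x : ℝ} (hx : x ∈ Set.Ico (0 : ℝ) 1) (n : ℕ) :
    ∑ j ∈ Finset.range n, (if ⌊x * 2 ^ (j + 1)⌋ % 2 = 1 then (1 : ℝ) else 0) / 4 ^ (j + 1)
      = (Phi n ⌊x * 2 ^ n⌋.toNat : ℝ) / 4 ^ n := by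
  set k := ⌊x * 2 ^ n⌋.toNat with hk
  have hPhi : (Phi n k : ℝ) / 4 ^ n
      = ∑ i ∈ Finset.range n, ((k / 2 ^ i % 2 : ℕ) : ℝ) * 4 ^ i / 4 ^ n := by
    unfold Phi
    push_cast
    rw [Finset.sum_div]
  rw [hPhi, ← Finset.sum_range_reflect (fun i => ((k / 2 ^ i % 2 : ℕ) : ℝ) * 4 ^ i / 4 ^ n) n]
  apply Finset.sum_congr rfl
  intro j hj
  have hjn : j < n := Finset.mem_range.mp hj
  rw [bit_eq hx hjn]
  have h4 : (4 : ℝ) ^ n = 4 ^ (n - 1 - j) * 4 ^ (j + 1) := by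
    rw [← pow_add]; congr 1; omega
  rw [h4]
  have h1 : (0:ℝ) < 4 ^ (n - 1 - j) := by positivity
  have h2 : (0:ℝ) < 4 ^ (j + 1) := by positivity
  rw [← hk]
  field_simp


open MeasureTheory Filter Topology

noncomputable def ee (j : ℕ) (x : ℝ) : ℝ := if ⌊x * 2 ^ (j + 1)⌋ % 2 = 1 then 1 else 0

lemma ee_nonneg (j x) : 0 ≤ ee j x := by unfold ee; split_ifs <;> norm_num

lemma ee_le_one (j x) : ee j x ≤ 1 := by unfold ee; split_ifs <;> norm_num

noncomputable def hfun (u : ℝ) (z : ℝ × ℝ) : ℝ :=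
  ∑' j : ℕ, (ee j z.1 + u * ee j z.2) / 4 ^ (j + 1)

lemma summable_div_pow {c : ℝ} (f : ℕ → ℝ) (h0 : ∀ j, 0 ≤ f j) (h1 : ∀ j, f j ≤ c) :
    Summable (fun j => f j / 4 ^ (j + 1)) := by
  have hgeo : Summable (fun j : ℕ => (4⁻¹ : ℝ) ^ j) :=
    summable_geometric_of_lt_one (by norm_num) (by norm_num)
  refine Summable.of_nonneg_of_le (fun j => div_nonneg (h0 j) (by positivity)) ?_
    (hgeo.mul_left (c * 4⁻¹))
  intro j
  have h2 : (f j) / 4 ^ (j + 1) ≤ c / 4 ^ (j + 1) :=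
    div_le_div_of_nonneg_right (h1 j) (by positivity)
  have h3 : c / 4 ^ (j + 1) = (c * 4⁻¹) * (4⁻¹ : ℝ) ^ j := by
    rw [inv_pow, pow_succ]
    have h4 : ((4:ℝ) ^ j) ≠ 0 := by positivity
    field_simp
  linarith

lemma summable_term (u : ℝ) (hu : 0 ≤ u) (x y : ℝ) :
    Summable (fun j => (ee j x + u * ee j y) / 4 ^ (j + 1)) := by
  apply summable_div_pow (c := 1 + u)
  · intro j
    have := ee_nonneg j x; have := ee_nonneg j y
    nlinarith
  · intro j
    have := ee_le_one j x; have := ee_le_one j y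
    have := ee_nonneg j y
    nlinarith

lemma tail_geom (u : ℝ) (n : ℕ) :
    ∑' j : ℕ, (1 + u) / 4 ^ (j + n + 1) = (1 + u) / (3 * 4 ^ n) := by
  have h1 : ∀ j : ℕ, (1 + u) / 4 ^ (j + n + 1) = ((1 + u) / 4 ^ (n + 1)) * (4⁻¹ : ℝ) ^ j := by
    intro j
    have hsplit : (4:ℝ) ^ (j + n + 1) = 4 ^ (n + 1) * 4 ^ j := by
      rw [← pow_add]; congr 1; omega
    rw [inv_pow, hsplit]
    have h4 : ((4:ℝ) ^ j) ≠ 0 := by positivity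
    have h5 : ((4:ℝ) ^ (n+1)) ≠ 0 := by positivity
    field_simp
  rw [tsum_congr h1, tsum_mul_left, tsum_geometric_of_lt_one (by norm_num) (by norm_num)]
  have h4 : (0:ℝ) < 4 ^ n := by positivity
  rw [pow_succ]
  field_simp
  ring

lemma hfun_decomp (u : ℝ) (hu : 0 ≤ u) {x y : ℝ} (hx : x ∈ Set.Ico (0:ℝ) 1)
    (hy : y ∈ Set.Ico (0:ℝ) 1) (n : ℕ) :
    ∃ t : ℝ, hfun u (x, y) = (Phi n ⌊x * 2 ^ n⌋.toNat : ℝ) / 4 ^ n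
        + u * ((Phi n ⌊y * 2 ^ n⌋.toNat : ℝ) / 4 ^ n) + t
      ∧ 0 ≤ t ∧ t ≤ (1 + u) / (3 * 4 ^ n) := by
  have hsum := summable_term u hu x y
  refine ⟨∑' j : ℕ, (ee (j + n) x + u * ee (j + n) y) / 4 ^ (j + n + 1), ?_, ?_, ?_⟩
  · have hsplit := Summable.sum_add_tsum_nat_add n hsum
    show (∑' j : ℕ, (ee j x + u * ee j y) / 4 ^ (j + 1)) = _
    rw [← hsplit]
    have hps : ∑ j ∈ Finset.range n, (ee j x + u * ee j y) / 4 ^ (j + 1)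
        = (Phi n ⌊x * 2 ^ n⌋.toNat : ℝ) / 4 ^ n + u * ((Phi n ⌊y * 2 ^ n⌋.toNat : ℝ) / 4 ^ n) := by
      rw [← partial_sum hx n, ← partial_sum hy n, Finset.mul_sum, ← Finset.sum_add_distrib]
      apply Finset.sum_congr rfl
      intro j _
      unfold ee
      ring
    rw [hps]
  · exact tsum_nonneg fun j =>
      div_nonneg (by nlinarith [ee_nonneg (j + n) x, ee_nonneg (j + n) y]) (by positivity)
  · rw [← tail_geom u n]
    have hs1 : Summable (fun j => (ee (j + n) x + u * ee (j + n) y) / 4 ^ (j + n + 1)) :=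
      (summable_nat_add_iff (f := fun j => (ee j x + u * ee j y) / 4 ^ (j + 1)) n).2 hsum
    have hs2 : Summable (fun j : ℕ => (1 + u) / 4 ^ (j + n + 1)) :=
      (summable_nat_add_iff (f := fun j : ℕ => (1 + u) / 4 ^ (j + 1)) n).2
        (summable_div_pow (c := 1 + u) (fun _ => 1 + u)
          (fun _ => by show (0:ℝ) ≤ 1 + u; linarith) (fun _ => le_rfl))
    apply Summable.tsum_le_tsum _ hs1 hs2
    intro j
    have h1 := ee_le_one (j + n) x; have h2 := ee_le_one (j + n) y
    have h3 := ee_nonneg (j + n) y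
    apply div_le_div_of_nonneg_right ?_ (by positivity)
    nlinarith

noncomputable def dig : ℝ → (ℕ → Bool) := fun x j => decide (⌊x * 2 ^ (j + 1)⌋ % 2 = 1)

lemma measurable_dig : Measurable dig := by
  apply measurable_pi_lambda
  intro j
  exact (Measurable.of_discrete (f := fun z : ℤ => decide (z % 2 = 1))).comp
    (Int.measurable_floor.comp (measurable_id.mul_const ((2:ℝ) ^ (j + 1))))

noncomputable def F (u : ℝ) : (ℕ → Bool) × (ℕ → Bool) → ℝ := fun εε' =>
  ∑' j : ℕ, ((if εε'.1 j then (1 : ℝ) else 0) + u * (if εε'.2 j then (1 : ℝ) else 0))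
    / 4 ^ (j + 1)

lemma measurable_F (u : ℝ) (hu : 0 ≤ u) : Measurable (F u) := by
  have hterm : ∀ j : ℕ, Measurable (fun εε' : (ℕ → Bool) × (ℕ → Bool) =>
      ((if εε'.1 j then (1 : ℝ) else 0) + u * (if εε'.2 j then (1 : ℝ) else 0)) / 4 ^ (j + 1)) := by
    intro j
    apply Measurable.div_const
    apply Measurable.add
    · exact (Measurable.of_discrete (f := fun b : Bool => if b = true then (1:ℝ) else 0)).comp
        ((measurable_pi_apply j).comp measurable_fst)
    · exact ((Measurable.of_discrete (f := fun b : Bool => if b = true then (1:ℝ) else 0)).comp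
        ((measurable_pi_apply j).comp measurable_snd)).const_mul u
  have hsummable : ∀ εε' : (ℕ → Bool) × (ℕ → Bool), Summable (fun j : ℕ =>
      ((if εε'.1 j then (1 : ℝ) else 0) + u * (if εε'.2 j then (1 : ℝ) else 0)) / 4 ^ (j + 1)) := by
    intro εε'
    apply summable_div_pow (c := 1 + u)
    · intro j; split_ifs <;> nlinarith
    · intro j; split_ifs <;> nlinarith
  apply measurable_of_tendsto_metrizable (f := fun n εε' => ∑ j ∈ Finset.range n,
    ((if εε'.1 j then (1 : ℝ) else 0) + u * (if εε'.2 j then (1 : ℝ) else 0)) / 4 ^ (j + 1))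
  · intro n
    exact Finset.measurable_sum _ fun j _ => hterm j
  · rw [tendsto_pi_nhds]
    intro εε'
    exact (hsummable εε').hasSum.tendsto_sum_nat

lemma muBes_eq (u : ℝ) (hu : 0 ≤ u) :
    muBes u = Measure.map (hfun u)
      ((volume.restrict (Set.Ico (0:ℝ) 1)).prod (volume.restrict (Set.Ico (0:ℝ) 1))) := by
  have h1 : bernoulliProd = Measure.map dig (volume.restrict (Set.Ico (0:ℝ) 1)) := rfl
  have h2 : muBes u = Measure.map (F u) (bernoulliProd.prod bernoulliProd) := rfl
  rw [h2, h1, Measure.map_prod_map _ _ measurable_dig measurable_dig,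
    Measure.map_map (measurable_F u hu) (measurable_dig.prodMap measurable_dig)]
  congr 1
  funext z
  show F u (dig z.1, dig z.2) = hfun u z
  unfold F hfun ee dig
  apply tsum_congr
  intro j
  simp only [decide_eq_true_eq]

lemma measurable_hfun (u : ℝ) (hu : 0 ≤ u) : Measurable (hfun u) := by
  have : hfun u = (F u) ∘ (Prod.map dig dig) := by
    funext z
    show _ = F u (dig z.1, dig z.2)
    unfold F hfun ee dig
    apply tsum_congr
    intro j
    simp only [decide_eq_true_eq]
  rw [this]
  exact (measurable_F u hu).comp (measurable_dig.prodMap measurable_dig)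

set_option maxHeartbeats 1000000 in
lemma interval_bound (p q : ℕ) (hp : 0 < p) (hq : 0 < q)
    (hodd : Odd (padicValNat 2 p + padicValNat 2 q)) {a b : ℝ} (hab : a < b) :
    Measure.map (hfun ((p : ℝ) / q))
      ((volume.restrict (Set.Ico (0:ℝ) 1)).prod (volume.restrict (Set.Ico (0:ℝ) 1)))
      (Set.Ico a b) ≤ ENNReal.ofReal (q * (b - a)) := by
  classical
  set u := (p : ℝ) / q with hu_def
  have hqR : (0:ℝ) < q := by exact_mod_cast hq
  have hu : 0 ≤ u := by positivity
  rw [Measure.map_apply (measurable_hfun u hu) measurableSet_Ico, Measure.prod_restrict,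
    Measure.restrict_apply (measurable_hfun u hu measurableSet_Ico)]
  have key : ∀ n : ℕ,
      (volume.prod volume) (hfun u ⁻¹' Set.Ico a b ∩ Set.Ico (0:ℝ) 1 ×ˢ Set.Ico (0:ℝ) 1)
        ≤ ENNReal.ofReal (q * (b - a) + (((p:ℝ) + q) / 3 + 1) * ((4:ℝ) ^ n)⁻¹) := by
    intro n
    have h4pos : (0:ℝ) < 4 ^ n := by positivity
    have h2pos : (0:ℝ) < 2 ^ n := by positivity
    set T : Finset (ℕ × ℕ) := (Finset.range (2 ^ n) ×ˢ Finset.range (2 ^ n)).filter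
      (fun kl => a * (q * 4 ^ n) - ((p:ℝ) + q) / 3
          ≤ (q : ℝ) * (Phi n kl.1 : ℝ) + (p : ℝ) * (Phi n kl.2 : ℝ)
        ∧ (q : ℝ) * (Phi n kl.1 : ℝ) + (p : ℝ) * (Phi n kl.2 : ℝ) < b * (q * 4 ^ n)) with hT
    have hsub : hfun u ⁻¹' Set.Ico a b ∩ Set.Ico (0:ℝ) 1 ×ˢ Set.Ico (0:ℝ) 1
        ⊆ ⋃ kl ∈ T, Set.Ico ((kl.1 : ℝ) / 2 ^ n) ((kl.1 + 1) / 2 ^ n)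
            ×ˢ Set.Ico ((kl.2 : ℝ) / 2 ^ n) ((kl.2 + 1) / 2 ^ n) := by
      rintro ⟨x, y⟩ ⟨hzab, hxS0, hyS0⟩
      have hxS : x ∈ Set.Ico (0:ℝ) 1 := hxS0
      have hyS : y ∈ Set.Ico (0:ℝ) 1 := hyS0
      obtain ⟨t, hdec, ht0, ht1⟩ := hfun_decomp u hu hxS hyS n
      obtain ⟨⟨hxl, hxu⟩, hxlt⟩ := toNat_floor_facts hxS n
      obtain ⟨⟨hyl, hyu⟩, hylt⟩ := toNat_floor_facts hyS n
      set kx := ⌊x * 2 ^ n⌋.toNat with hkx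
      set ky := ⌊y * 2 ^ n⌋.toNat with hky
      have hzab' : a ≤ hfun u (x, y) ∧ hfun u (x, y) < b := hzab
      have hq0 : (q : ℝ) ≠ 0 := hqR.ne'
      have e3 : q * 4 ^ n * hfun u (x, y)
          = ((q : ℝ) * (Phi n kx : ℝ) + (p : ℝ) * (Phi n ky : ℝ)) + q * 4 ^ n * t := by
        rw [hdec, hu_def]
        field_simp
      have e4 : q * 4 ^ n * t ≤ ((p:ℝ) + q) / 3 := by
        have h5 := mul_le_mul_of_nonneg_left ht1 (le_of_lt (by positivity : (0:ℝ) < q * 4 ^ n))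
        have hqu : (q : ℝ) * u = p := by rw [hu_def]; field_simp
        calc q * 4 ^ n * t ≤ q * 4 ^ n * ((1 + u) / (3 * 4 ^ n)) := h5
          _ = ((p:ℝ) + q) / 3 := by
              field_simp
              nlinarith [hqu]
      have e5 : (0:ℝ) ≤ q * 4 ^ n * t := by positivity
      have e1 : q * 4 ^ n * a ≤ q * 4 ^ n * hfun u (x, y) :=
        mul_le_mul_of_nonneg_left hzab'.1 (by positivity)
      have e2 : q * 4 ^ n * hfun u (x, y) < q * 4 ^ n * b :=
        mul_lt_mul_of_pos_left hzab'.2 (by positivity)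
      have hmemT : (kx, ky) ∈ T := by
        rw [hT]
        simp only [Finset.mem_filter, Finset.mem_product, Finset.mem_range]
        exact ⟨⟨hxlt, hylt⟩, by linarith [e1, e3, e4], by linarith [e2, e3, e5]⟩
      apply Set.mem_biUnion hmemT
      refine ⟨⟨?_, ?_⟩, ?_, ?_⟩
      · rw [div_le_iff₀ h2pos]; exact le_trans (by norm_num) hxl
      · rw [lt_div_iff₀ h2pos]; push_cast; linarith
      · rw [div_le_iff₀ h2pos]; exact le_trans (by norm_num) hyl
      · rw [lt_div_iff₀ h2pos]; push_cast; linarith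
    have hboxval : ∀ kl : ℕ × ℕ, kl ∈ T →
        (volume.prod volume) (Set.Ico ((kl.1 : ℝ) / 2 ^ n) ((kl.1 + 1) / 2 ^ n)
          ×ˢ Set.Ico ((kl.2 : ℝ) / 2 ^ n) ((kl.2 + 1) / 2 ^ n))
          = ENNReal.ofReal (((4:ℝ) ^ n)⁻¹) := by
      intro kl _
      rw [Measure.prod_prod, Real.volume_Ico, Real.volume_Ico]
      have hlen : ∀ m : ℕ, ((m : ℝ) + 1) / 2 ^ n - (m : ℝ) / 2 ^ n = ((2:ℝ) ^ n)⁻¹ := by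
        intro m; field_simp; ring
      rw [hlen, hlen, ← ENNReal.ofReal_mul (by positivity)]
      congr 1
      rw [← mul_inv]
      congr 1
      rw [← mul_pow]
      norm_num
    have hcard : (T.card : ℝ) ≤ q * 4 ^ n * (b - a) + ((p:ℝ) + q) / 3 + 1 := by
      have hinj : T.card ≤ (Finset.Ico ⌈a * (q * 4 ^ n) - ((p:ℝ) + q) / 3⌉ ⌈b * ((q:ℝ) * 4 ^ n)⌉).card := by
        apply Finset.card_le_card_of_injOn
          (fun kl => ((q * Phi n kl.1 + p * Phi n kl.2 : ℕ) : ℤ))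
        · intro kl hkl
          rw [hT] at hkl
          simp only [Finset.mem_coe, Finset.mem_filter, Finset.mem_product, Finset.mem_range] at hkl
          obtain ⟨-, h1, h2⟩ := hkl
          rw [Finset.mem_coe, Finset.mem_Ico]
          constructor
          · rw [Int.ceil_le]
            push_cast
            exact h1
          · rw [Int.lt_ceil]
            push_cast
            exact h2
        · intro kl hkl kl' hkl' heq
          rw [hT] at hkl hkl'
          simp only [Finset.coe_filter, Set.mem_setOf_eq, Finset.mem_product,
            Finset.mem_range] at hkl hkl'
          have hnat : q * Phi n kl.1 + p * Phi n kl.2 = q * Phi n kl'.1 + p * Phi n kl'.2 := by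
            have h := heq
            simp only at h
            exact_mod_cast h
          obtain ⟨h1, h2⟩ := key_inj p q n hp hq hodd hkl.1.1 hkl.1.2 hkl'.1.1 hkl'.1.2 hnat
          exact Prod.ext h1 h2
      have hcI : ((Finset.Ico ⌈a * (q * 4 ^ n) - ((p:ℝ) + q) / 3⌉ ⌈b * ((q:ℝ) * 4 ^ n)⌉).card : ℝ)
          ≤ b * ((q:ℝ) * 4 ^ n) + 1 - (a * (q * 4 ^ n) - ((p:ℝ) + q) / 3) := by
        set A' : ℝ := a * (q * 4 ^ n) - ((p:ℝ) + q) / 3 with hA'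
        set B' : ℝ := b * ((q:ℝ) * 4 ^ n) with hB'
        rw [Int.card_Ico]
        have h1 : ((⌈B'⌉ : ℝ) - ⌈A'⌉) ≤ B' + 1 - A' :=
          by linarith [Int.ceil_lt_add_one B', Int.le_ceil A']
        have h2 : (0:ℝ) ≤ B' + 1 - A' := by
          rw [hA', hB']
          have h6 : a * ((q:ℝ) * 4 ^ n) ≤ b * ((q:ℝ) * 4 ^ n) :=
            mul_le_mul_of_nonneg_right hab.le (by positivity)
          have h7 : (0:ℝ) ≤ ((p:ℝ) + q) / 3 := by positivity
          linarith
        rcases le_total (⌈B'⌉ - ⌈A'⌉) 0 with hc | hc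
        · have h3 : (⌈B'⌉ - ⌈A'⌉).toNat = 0 := by omega
          rw [h3]
          simpa using h2
        · have h3 : ((⌈B'⌉ - ⌈A'⌉).toNat : ℝ) = ((⌈B'⌉ : ℝ) - ⌈A'⌉) := by
            have h4 := Int.toNat_of_nonneg hc
            exact_mod_cast congrArg (Int.cast : ℤ → ℝ) h4
          rw [h3]
          exact h1
      calc (T.card : ℝ) ≤ _ := by exact_mod_cast hinj
        _ ≤ _ := hcI
        _ = q * 4 ^ n * (b - a) + ((p:ℝ) + q) / 3 + 1 := by ring
    calc (volume.prod volume) (hfun u ⁻¹' Set.Ico a b ∩ Set.Ico (0:ℝ) 1 ×ˢ Set.Ico (0:ℝ) 1)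
        ≤ (volume.prod volume) (⋃ kl ∈ T, Set.Ico ((kl.1 : ℝ) / 2 ^ n) ((kl.1 + 1) / 2 ^ n)
            ×ˢ Set.Ico ((kl.2 : ℝ) / 2 ^ n) ((kl.2 + 1) / 2 ^ n)) := measure_mono hsub
      _ ≤ ∑ kl ∈ T, (volume.prod volume) (Set.Ico ((kl.1 : ℝ) / 2 ^ n) ((kl.1 + 1) / 2 ^ n)
            ×ˢ Set.Ico ((kl.2 : ℝ) / 2 ^ n) ((kl.2 + 1) / 2 ^ n)) :=
          measure_biUnion_finset_le T _
      _ = T.card * ENNReal.ofReal (((4:ℝ) ^ n)⁻¹) := by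
          rw [Finset.sum_congr rfl hboxval, Finset.sum_const, nsmul_eq_mul]
      _ ≤ ENNReal.ofReal (q * 4 ^ n * (b - a) + ((p:ℝ) + q) / 3 + 1)
            * ENNReal.ofReal (((4:ℝ) ^ n)⁻¹) := by
          apply mul_le_mul_left
          have hTc : (T.card : ENNReal) = ENNReal.ofReal ((T.card : ℝ)) :=
            (ENNReal.ofReal_natCast _).symm
          rw [hTc]
          exact ENNReal.ofReal_le_ofReal hcard
      _ = ENNReal.ofReal (q * (b - a) + (((p:ℝ) + q) / 3 + 1) * ((4:ℝ) ^ n)⁻¹) := by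
          rw [← ENNReal.ofReal_mul (by nlinarith)]
          congr 1
          field_simp
          ring
  have htend : Filter.Tendsto (fun n : ℕ =>
      ENNReal.ofReal (q * (b - a) + (((p:ℝ) + q) / 3 + 1) * ((4:ℝ) ^ n)⁻¹)) Filter.atTop
      (nhds (ENNReal.ofReal (q * (b - a)))) := by
    have h1 : Filter.Tendsto (fun n : ℕ => ((4:ℝ) ^ n)⁻¹) Filter.atTop (nhds 0) := by
      have h2 := tendsto_pow_atTop_nhds_zero_of_lt_one
        (r := (4:ℝ)⁻¹) (by norm_num) (by norm_num)
      simpa [inv_pow] using h2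
    have h2 : Filter.Tendsto (fun n : ℕ => q * (b - a) + (((p:ℝ) + q) / 3 + 1) * ((4:ℝ) ^ n)⁻¹)
        Filter.atTop (nhds ((q : ℝ) * (b - a))) := by
      have h3 := Filter.Tendsto.add
        (tendsto_const_nhds (x := (q : ℝ) * (b - a)) (f := Filter.atTop (α := ℕ)))
        (h1.const_mul (((p:ℝ) + q) / 3 + 1))
      simpa using h3
    exact (ENNReal.continuous_ofReal.tendsto _).comp h2
  exact ge_of_tendsto htend (Filter.Eventually.of_forall key)

/-! ### Dyadic decomposition of open sets -/

def dyI (n : ℕ) (k : ℤ) : Set ℝ := Set.Ico ((k : ℝ) / 2 ^ n) (((k : ℝ) + 1) / 2 ^ n)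

lemma mem_dyI {x : ℝ} {n : ℕ} {k : ℤ} : x ∈ dyI n k ↔ k = ⌊x * 2 ^ n⌋ := by
  have h2 : (0:ℝ) < 2 ^ n := by positivity
  rw [dyI, Set.mem_Ico, div_le_iff₀ h2, lt_div_iff₀ h2]
  constructor
  · rintro ⟨h1, h2'⟩
    symm
    rw [Int.floor_eq_iff]
    constructor
    · exact h1
    · push_cast
      linarith
  · rintro rfl
    constructor
    · exact Int.floor_le _
    · have := Int.lt_floor_add_one (x * 2 ^ n)
      linarith

lemma floor_scale {x : ℝ} {m n : ℕ} (hmn : m ≤ n) :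
    ⌊x * 2 ^ m⌋ = ⌊x * 2 ^ n⌋ / (2:ℤ) ^ (n - m) := by
  have h := floor_div_nat (x * 2 ^ n) (2 ^ (n - m)) (by positivity)
  have harg : x * 2 ^ n / ((2 ^ (n - m) : ℕ) : ℝ) = x * 2 ^ m := by
    push_cast
    rw [show (2:ℝ) ^ n = 2 ^ m * 2 ^ (n - m) by rw [← pow_add]; congr 1; omega]
    have hpos : ((2:ℝ) ^ (n - m)) ≠ 0 := by positivity
    field_simp
  rw [harg] at h
  rw [h]
  congr 1

def chosen (U : Set ℝ) (nk : ℕ × ℤ) : Prop :=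
  dyI nk.1 nk.2 ⊆ U ∧ ∀ m : ℕ, m < nk.1 → ¬ dyI m (nk.2 / 2 ^ (nk.1 - m)) ⊆ U

lemma chosen_cover {U : Set ℝ} (hU : IsOpen U) {x : ℝ} (hx : x ∈ U) :
    ∃ nk : ℕ × ℤ, chosen U nk ∧ x ∈ dyI nk.1 nk.2 := by
  classical
  have hex : ∃ n : ℕ, dyI n ⌊x * 2 ^ n⌋ ⊆ U := by
    obtain ⟨ε, hε, hball⟩ := Metric.isOpen_iff.mp hU x hx
    obtain ⟨n, hn⟩ := pow_unbounded_of_one_lt (ε⁻¹) (by norm_num : (1:ℝ) < 2)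
    have h2 : (0:ℝ) < 2 ^ n := by positivity
    have hinv : ((2:ℝ) ^ n)⁻¹ < ε := by
      rw [inv_lt_comm₀ h2 hε]
      exact hn
    refine ⟨n, fun y hy => hball ?_⟩
    have hxd : x ∈ dyI n ⌊x * 2 ^ n⌋ := mem_dyI.mpr rfl
    rw [Metric.mem_ball, Real.dist_eq, abs_lt]
    obtain ⟨hy1, hy2⟩ := hy
    obtain ⟨hx1, hx2⟩ := hxd
    have hgap : ((⌊x * 2 ^ n⌋ : ℝ) + 1) / 2 ^ n - (⌊x * 2 ^ n⌋ : ℝ) / 2 ^ n = ((2:ℝ) ^ n)⁻¹ := by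
      field_simp; ring
    constructor
    · linarith
    · linarith
  let n₀ := Nat.find hex
  refine ⟨(n₀, ⌊x * 2 ^ n₀⌋), ⟨Nat.find_spec hex, ?_⟩, mem_dyI.mpr rfl⟩
  intro m hm
  have key : ⌊x * 2 ^ n₀⌋ / (2:ℤ) ^ (n₀ - m) = ⌊x * 2 ^ m⌋ := (floor_scale hm.le).symm
  simp only
  rw [key]
  exact Nat.find_min hex hm

lemma chosen_disjoint {U : Set ℝ} {nk nk' : ℕ × ℤ} (h : chosen U nk) (h' : chosen U nk')
    (hne : nk ≠ nk') : Disjoint (dyI nk.1 nk.2) (dyI nk'.1 nk'.2) := by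
  rw [Set.disjoint_left]
  intro z hz hz'
  obtain ⟨n, k⟩ := nk
  obtain ⟨n', k'⟩ := nk'
  have hk : k = ⌊z * 2 ^ n⌋ := mem_dyI.mp hz
  have hk' : k' = ⌊z * 2 ^ n'⌋ := mem_dyI.mp hz'
  rcases lt_trichotomy n n' with hlt | heq | hgt
  · apply h'.2 n hlt
    have : k' / (2:ℤ) ^ (n' - n) = k := by
      rw [hk', ← floor_scale hlt.le, ← hk]
    simp only
    rw [this]
    exact h.1
  · subst heq
    rw [hk, ← hk'] at hne
    exact hne rfl
  · apply h.2 n' hgt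
    have : k / (2:ℤ) ^ (n - n') = k' := by
      rw [hk, ← floor_scale hgt.le, ← hk']
    simp only
    rw [this]
    exact h'.1

lemma open_bound {μ : Measure ℝ} (C : ENNReal)
    (hI : ∀ (n : ℕ) (k : ℤ), μ (dyI n k) ≤ C * volume (dyI n k))
    {U : Set ℝ} (hU : IsOpen U) : μ U ≤ C * volume U := by
  classical
  set f : ℕ × ℤ → Set ℝ := fun nk => if chosen U nk then dyI nk.1 nk.2 else ∅ with hf
  have hcover : U = ⋃ nk, f nk := by
    ext z
    constructor
    · intro hz
      obtain ⟨nk, hc, hm⟩ := chosen_cover hU hz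
      refine Set.mem_iUnion.mpr ⟨nk, ?_⟩
      rw [hf]
      simp only [if_pos hc]
      exact hm
    · intro hz
      obtain ⟨nk, hm⟩ := Set.mem_iUnion.mp hz
      rw [hf] at hm
      simp only at hm
      split_ifs at hm with hc
      · exact hc.1 hm
      · exact absurd hm (Set.notMem_empty z)
  have hmeas : ∀ nk, MeasurableSet (f nk) := fun nk => by
    rw [hf]
    simp only
    split_ifs
    · exact measurableSet_Ico
    · exact MeasurableSet.empty
  have hdisj : Pairwise (Function.onFun Disjoint f) := by
    intro nk nk' hne
    rw [Function.onFun, hf]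
    simp only
    split_ifs with h h'
    · exact chosen_disjoint h h' hne
    · exact Set.disjoint_empty _
    · exact Set.empty_disjoint _
    · exact Set.disjoint_empty _
  calc μ U = μ (⋃ nk, f nk) := by rw [← hcover]
    _ ≤ ∑' nk, μ (f nk) := measure_iUnion_le _
    _ ≤ ∑' nk, C * volume (f nk) := ENNReal.tsum_le_tsum fun nk => by
        rw [hf]
        simp only
        split_ifs
        · exact hI _ _
        · simp
    _ = C * ∑' nk, volume (f nk) := ENNReal.tsum_mul_left
    _ = C * volume (⋃ nk, f nk) := by rw [measure_iUnion hdisj hmeas]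
    _ = C * volume U := by rw [← hcover]

end MuBesAux

set_option maxHeartbeats 1000000 in
/-- If `u = p/q` with `p, q` positive coprime, `0 < u < 1`, and `p* + q*` odd, then
`μ_u` is absolutely continuous with respect to Lebesgue measure with density bounded by
`2q`: `μ_u(A) ≤ 2q·|A|` for every measurable `A`. -/
theorem muBes_absolutelyContinuous_of_odd_sum (p q : ℕ) (hp : 0 < p) (hq : 0 < q)
    (hpq : Nat.Coprime p q) (hlt : (p : ℝ) / q < 1)
    (hodd : Odd (fstDigit 4 p + fstDigit 4 q)) :
    muBes ((p : ℝ) / q) ≪ volume ∧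
      ∀ A : Set ℝ, MeasurableSet A →
        muBes ((p : ℝ) / q) A ≤ 2 * (q : ENNReal) * volume A := by
  classical
  have hqR : (0:ℝ) < q := by exact_mod_cast hq
  set u := (p : ℝ) / q with hu_def
  have hu : 0 ≤ u := by positivity
  have hoddv : Odd (padicValNat 2 p + padicValNat 2 q) := by
    have h1 := MuBesAux.fstDigit_parity p hp.ne'
    have h2 := MuBesAux.fstDigit_parity q hq.ne'
    rw [Nat.odd_iff] at hodd ⊢
    unfold fstDigit at hodd
    omega
  have hIco : ∀ a b : ℝ, muBes u (Set.Ico a b) ≤ (q : ENNReal) * volume (Set.Ico a b) := by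
    intro a b
    rcases le_or_gt b a with hba | hab
    · rw [Set.Ico_eq_empty (not_lt.mpr hba)]
      simp
    · have h1 := MuBesAux.interval_bound p q hp hq hoddv hab
      rw [← hu_def] at h1
      rw [MuBesAux.muBes_eq u hu, Real.volume_Ico]
      calc _ ≤ ENNReal.ofReal (q * (b - a)) := h1
        _ = (q : ENNReal) * ENNReal.ofReal (b - a) := by
            rw [ENNReal.ofReal_mul (by positivity), ENNReal.ofReal_natCast]
  have hdyI : ∀ (n : ℕ) (k : ℤ),
      muBes u (MuBesAux.dyI n k) ≤ (q : ENNReal) * volume (MuBesAux.dyI n k) :=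
    fun n k => hIco _ _
  have hopen : ∀ U : Set ℝ, IsOpen U → muBes u U ≤ (q : ENNReal) * volume U :=
    fun U hU => MuBesAux.open_bound _ hdyI hU
  have hq0 : (q : ENNReal) ≠ 0 := by exact_mod_cast hq.ne'
  have hqtop : (q : ENNReal) ≠ ⊤ := ENNReal.natCast_ne_top q
  have hmeasb : ∀ A : Set ℝ, MeasurableSet A → muBes u A ≤ (q : ENNReal) * volume A := by
    intro A hA
    by_cases hvol : volume A = ⊤
    · rw [hvol, ENNReal.mul_top hq0]
      exact le_top
    · refine ENNReal.le_of_forall_pos_le_add fun ε hε _ => ?_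
      have hδ0 : (ε : ENNReal) / q ≠ 0 := by
        simp only [ne_eq, ENNReal.div_eq_zero_iff, not_or]
        exact ⟨by exact_mod_cast hε.ne', hqtop⟩
      have hδ : volume A < volume A + (ε : ENNReal) / q := ENNReal.lt_add_right hvol hδ0
      obtain ⟨U, hAU, hUopen, hUlt⟩ := Set.exists_isOpen_lt_of_lt A _ hδ
      calc muBes u A ≤ muBes u U := measure_mono hAU
        _ ≤ q * volume U := hopen U hUopen
        _ ≤ q * (volume A + (ε : ENNReal) / q) := mul_le_mul_right hUlt.le _
        _ = q * volume A + q * ((ε : ENNReal) / q) := mul_add _ _ _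
        _ = q * volume A + ε := by rw [ENNReal.mul_div_cancel hq0 hqtop]
  constructor
  · apply MeasureTheory.Measure.AbsolutelyContinuous.mk
    intro s hs hs0
    have h2 := hmeasb s hs
    rw [hs0, mul_zero] at h2
    exact le_antisymm h2 zero_le
  · intro A hA
    calc muBes u A ≤ (q : ENNReal) * volume A := hmeasb A hA
      _ ≤ 2 * (q : ENNReal) * volume A := by
          apply mul_le_mul_left
          calc (q : ENNReal) = 1 * q := (one_mul _).symm
            _ ≤ 2 * q := mul_le_mul_left (by norm_num : (1:ENNReal) ≤ 2) (q : ENNReal)
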